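/- arXiv:2604.00585 — 3 statements merged into one kernel-verified Lean document; each statement's English description precedes it below -/
import Mathlib

section
/- Let f: U → ℝ be a convex function on an open convex set U ⊆ ℝ^d. If at some point x ∈ U all partial derivatives ∂_i f(x) exist, then f is (totally/Fréchet) differentiable at x. -/
set_option maxHeartbeats 1000000

open Asymptotics Filter Finset

/-- coordinate bound in Euclidean space -/
lemma euclid_abs_coord_le_norm {d : ℕ} (v : EuclideanSpace ℝ (Fin d)) (i : Fin d) :
    |v i| ≤ ‖v‖ := by
  rw [EuclideanSpace.norm_eq]
  calc |v i| = Real.sqrt (‖v i‖ ^ 2) := by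
        rw [Real.norm_eq_abs, Real.sqrt_sq (abs_nonneg _)]
    _ ≤ _ := Real.sqrt_le_sqrt (Finset.single_le_sum
        (f := fun j => ‖v j‖ ^ 2) (fun _ _ => sq_nonneg _) (Finset.mem_univ i))

/-- decomposition into coordinates -/
lemma euclid_sum_single {d : ℕ} (v : EuclideanSpace ℝ (Fin d)) :
    ∑ i : Fin d, v i • EuclideanSpace.single i (1 : ℝ) = v := by
  ext j
  rw [WithLp.ofLp_sum, Finset.sum_apply]
  simp [EuclideanSpace.single_apply]

/-- A convex function on an open convex set in ℝ^d that has all partial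
derivatives at a point is (Fréchet) differentiable at that point. -/
theorem convex_differentiableAt_of_partials {d : ℕ}
    (U : Set (EuclideanSpace ℝ (Fin d))) (hU : IsOpen U) (hUconv : Convex ℝ U)
    (f : EuclideanSpace ℝ (Fin d) → ℝ) (hf : ConvexOn ℝ U f)
    (x : EuclideanSpace ℝ (Fin d)) (hx : x ∈ U)
    (hpartial : ∀ i : Fin d, ∃ p : ℝ,
      HasDerivAt (fun t : ℝ => f (x + t • EuclideanSpace.single i (1:ℝ))) p 0) :
    DifferentiableAt ℝ f x := by
  rcases Nat.eq_zero_or_pos d with hd0 | hdpos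
  · -- trivial case: the space is a subsingleton
    subst hd0
    have hsub : Subsingleton (EuclideanSpace ℝ (Fin 0)) := by infer_instance
    have : f =ᶠ[nhds x] fun _ => f x := by
      filter_upwards with y
      rw [Subsingleton.elim y x]
    exact (differentiableAt_const (f x)).congr_of_eventuallyEq this
  have hd : (0:ℝ) < d := by exact_mod_cast hdpos
  -- the candidate derivative
  choose p hp using hpartial
  set L : EuclideanSpace ℝ (Fin d) →L[ℝ] ℝ :=
    ∑ i : Fin d, p i • (EuclideanSpace.proj i : EuclideanSpace ℝ (Fin d) →L[ℝ] ℝ) with hL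
  have hLapp : ∀ v : EuclideanSpace ℝ (Fin d), L v = ∑ i : Fin d, p i * v i := by
    intro v
    simp [hL, ContinuousLinearMap.sum_apply]
  -- one-dimensional little-o facts
  set g : Fin d → ℝ → ℝ :=
    fun i t => f (x + t • EuclideanSpace.single i (1:ℝ)) - f x - t * p i with hgdef
  have hg : ∀ i, (fun t => g i t) =o[nhds (0:ℝ)] fun t => t := by
    intro i
    have := (hasDerivAt_iff_isLittleO_nhds_zero).mp (hp i)
    simpa [hgdef, mul_comm] using this
  -- a ball around x inside U
  obtain ⟨ε, hε, hball⟩ := Metric.isOpen_iff.mp hU x hx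
  set δ : ℝ := ε / d with hδdef
  have hδ : 0 < δ := div_pos hε hd
  have hd1 : (1:ℝ) ≤ d := by exact_mod_cast hdpos
  have hδε : δ ≤ ε := by
    rw [hδdef, div_le_iff₀ hd]
    nlinarith
  -- membership facts
  have hmem : ∀ v : EuclideanSpace ℝ (Fin d), ‖v‖ < δ → ∀ i : Fin d,
      x + ((d:ℝ) * v i) • EuclideanSpace.single i (1:ℝ) ∈ U := by
    intro v hv i
    apply hball
    rw [Metric.mem_ball, dist_eq_norm]
    have h1 : ‖x + ((d:ℝ) * v i) • EuclideanSpace.single i (1:ℝ) - x‖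
        = |(d:ℝ) * v i| * ‖EuclideanSpace.single i (1:ℝ)‖ := by
      rw [add_sub_cancel_left, norm_smul, Real.norm_eq_abs]
    rw [h1, EuclideanSpace.norm_single, norm_one, mul_one, abs_mul, abs_of_pos hd]
    calc (d:ℝ) * |v i| ≤ (d:ℝ) * ‖v‖ :=
          mul_le_mul_of_nonneg_left (euclid_abs_coord_le_norm v i) hd.le
      _ < (d:ℝ) * δ := by exact mul_lt_mul_of_pos_left hv hd
      _ = ε := by rw [hδdef]; field_simp
  have hmemv : ∀ v : EuclideanSpace ℝ (Fin d), ‖v‖ < δ → x + v ∈ U := by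
    intro v hv
    apply hball
    rw [Metric.mem_ball, dist_eq_norm, add_sub_cancel_left]
    exact lt_of_lt_of_le hv hδε
  -- key convexity upper bound
  have key : ∀ v : EuclideanSpace ℝ (Fin d), ‖v‖ < δ →
      f (x + v) - f x - L v ≤ ∑ i : Fin d, (1/(d:ℝ)) * g i ((d:ℝ) * v i) := by
    intro v hv
    set y : Fin d → EuclideanSpace ℝ (Fin d) :=
      fun i => x + ((d:ℝ) * v i) • EuclideanSpace.single i (1:ℝ) with hy
    have hw1 : ∑ _i : Fin d, (1/(d:ℝ)) = 1 := by
      rw [Finset.sum_const, Finset.card_univ, Fintype.card_fin, nsmul_eq_mul]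
      field_simp
    have hcomb : ∑ i : Fin d, (1/(d:ℝ)) • y i = x + v := by
      simp only [hy, smul_add, Finset.sum_add_distrib, smul_smul]
      rw [← Finset.sum_smul, hw1, one_smul]
      congr 1
      have : ∀ i : Fin d, (1/(d:ℝ) * ((d:ℝ) * v i)) = v i := by
        intro i; field_simp
      simp only [this]
      exact euclid_sum_single v
    have hjensen : f (x + v) ≤ ∑ i : Fin d, (1/(d:ℝ)) * f (y i) := by
      rw [← hcomb]
      exact hf.map_sum_le (fun i _ => by positivity) hw1 (fun i _ => hmem v hv i)
    have hexpand : ∑ i : Fin d, (1/(d:ℝ)) * g i ((d:ℝ) * v i)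
        = (∑ i : Fin d, (1/(d:ℝ)) * f (y i)) - f x - L v := by
      rw [hLapp]
      simp only [hgdef, hy, mul_sub]
      rw [Finset.sum_sub_distrib, Finset.sum_sub_distrib, Finset.sum_const,
        Finset.card_univ, Fintype.card_fin, nsmul_eq_mul]
      have h1 : (d:ℝ) * (1/(d:ℝ) * f x) = f x := by field_simp
      have h2 : ∀ i : Fin d, 1/(d:ℝ) * ((d:ℝ) * v i * p i) = p i * v i := by
        intro i; field_simp
      rw [h1]
      congr 1
      exact Finset.sum_congr rfl fun i _ => h2 i
    linarith [hjensen]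
  -- midpoint lower bound
  have lower : ∀ v : EuclideanSpace ℝ (Fin d), ‖v‖ < δ →
      -(∑ i : Fin d, (1/(d:ℝ)) * g i ((d:ℝ) * (-v) i)) ≤ f (x + v) - f x - L v := by
    intro v hv
    have hnv : ‖(-v : EuclideanSpace ℝ (Fin d))‖ < δ := by rwa [norm_neg]
    have hkey := key (-v) hnv
    have hmid : f x ≤ (1/2 : ℝ) * f (x + v) + (1/2 : ℝ) * f (x + -v) := by
      have := hf.2 (hmemv v hv) (hmemv (-v) hnv)
        (by norm_num : (0:ℝ) ≤ 1/2) (by norm_num : (0:ℝ) ≤ 1/2) (by norm_num)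
      have hxeq : (1/2 : ℝ) • (x + v) + (1/2 : ℝ) • (x + -v) = x := by
        rw [smul_add, smul_add, smul_neg]
        rw [← add_assoc]
        have : (1/2:ℝ) • x + (1/2:ℝ) • v + (1/2:ℝ) • x = x + (1/2:ℝ) • v := by
          rw [add_right_comm, ← add_smul]
          norm_num
        rw [this, add_assoc, add_neg_cancel, add_zero]
      rw [hxeq] at this
      simpa [smul_eq_mul] using this
    have hLneg : L (-v) = -L v := by rw [map_neg]
    rw [hLneg] at hkey
    linarith
  -- little-o of the error bound
  have hbound : ∀ (s : ℝ), s = 1 ∨ s = -1 →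
      (fun v : EuclideanSpace ℝ (Fin d) =>
        ∑ i : Fin d, (1/(d:ℝ)) * g i ((d:ℝ) * (s * v i))) =o[nhds 0] fun v => v := by
    intro s hs
    apply Asymptotics.IsLittleO.fun_sum
    intro i _
    apply Asymptotics.IsLittleO.const_mul_left
    have hc : Tendsto (fun v : EuclideanSpace ℝ (Fin d) => (d:ℝ) * (s * v i))
        (nhds 0) (nhds (0:ℝ)) := by
      have : Tendsto (fun v : EuclideanSpace ℝ (Fin d) => v i) (nhds 0) (nhds (0:ℝ)) := by
        have := (EuclideanSpace.proj i :
          EuclideanSpace ℝ (Fin d) →L[ℝ] ℝ).continuous.tendsto (0 : EuclideanSpace ℝ (Fin d))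
        simpa using this
      have := this.const_mul s
      have := this.const_mul (d:ℝ)
      simpa using this
    have h1 : (fun v : EuclideanSpace ℝ (Fin d) => g i ((d:ℝ) * (s * v i)))
        =o[nhds 0] fun v => (d:ℝ) * (s * v i) := (hg i).comp_tendsto hc
    have h2 : (fun v : EuclideanSpace ℝ (Fin d) => (d:ℝ) * (s * v i))
        =O[nhds 0] fun v => v := by
      rw [Asymptotics.isBigO_iff]
      refine ⟨(d:ℝ), Filter.Eventually.of_forall fun v => ?_⟩
      rw [Real.norm_eq_abs, abs_mul, abs_mul, abs_of_pos hd]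
      rcases hs with h | h <;> simp [h, abs_neg] <;>
        exact mul_le_mul_of_nonneg_left (euclid_abs_coord_le_norm v i) hd.le
    exact h1.trans_isBigO h2
  have hB1 := hbound 1 (Or.inl rfl)
  have hB2 := hbound (-1) (Or.inr rfl)
  simp only [one_mul] at hB1
  -- conclude
  have hfd : HasFDerivAt f L x := by
    rw [hasFDerivAt_iff_isLittleO_nhds_zero]
    rw [Asymptotics.isLittleO_iff]
    intro c hc
    have e1 := (Asymptotics.isLittleO_iff.mp hB1) (half_pos hc)
    have e2 := (Asymptotics.isLittleO_iff.mp hB2) (half_pos hc)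
    have e3 : ∀ᶠ v : EuclideanSpace ℝ (Fin d) in nhds 0, ‖v‖ < δ :=
      Metric.eventually_nhds_iff.mpr ⟨δ, hδ, fun {y} hy => by
        simpa [dist_eq_norm] using hy⟩
    filter_upwards [e1, e2, e3] with v h1 h2 h3
    have hup := key v h3
    have hlo := lower v h3
    have hB2v : -(∑ i : Fin d, (1/(d:ℝ)) * g i ((d:ℝ) * (-1 * v i)))
        ≤ f (x + v) - f x - L v := by
      have : ∀ i : Fin d, (-v : EuclideanSpace ℝ (Fin d)) i = -1 * v i := by
        intro i; simp
      simpa [this] using hlo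
    rw [Real.norm_eq_abs] at h1 h2 ⊢
    rw [abs_le]
    constructor
    · have := neg_abs_le (∑ i : Fin d, (1/(d:ℝ)) * g i ((d:ℝ) * (-1 * v i)))
      have hh : ∑ i : Fin d, (1/(d:ℝ)) * g i ((d:ℝ) * (-1 * v i)) ≤ c/2 * ‖v‖ :=
        le_trans (le_abs_self _) h2
      nlinarith [norm_nonneg v]
    · have hh : ∑ i : Fin d, (1/(d:ℝ)) * g i ((d:ℝ) * v i) ≤ c/2 * ‖v‖ :=
        le_trans (le_abs_self _) h1
      nlinarith [norm_nonneg v]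
  exact hfd.differentiableAt
end

section
/- Let A: [0,1] → ℝ be convex with max(t, 1−t) ≤ A(t) ≤ 1 for all t ∈ [0,1], twice continuously differentiable on (0,1), and suppose A_∞ := sup_{t ∈ (0,1)} t(1−t)A''(t) < ∞. Define L(x₁,x₂) = (x₁+x₂)·A(x₂/(x₁+x₂)) for (x₁,x₂) with x₁+x₂ > 0. Then for all (x₁,x₂) ∈ (0,∞)², the second partial derivatives of L satisfy |∂_{11}L(x₁,x₂)| ≤ A_∞/x₁, |∂_{22}L(x₁,x₂)| ≤ A_∞/x₂, and |∂_{12}L(x₁,x₂)| ≤ A_∞/max(x₁,x₂). -/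
open Set Filter


lemma aux_deriv_nonneg_of_monotoneOn {g : ℝ → ℝ} {c x : ℝ}
    (hm : MonotoneOn g (Set.Ioo (0:ℝ) 1)) (hx : x ∈ Set.Ioo (0:ℝ) 1)
    (hd : HasDerivAt g c x) : 0 ≤ c := by
  have h := hasDerivAt_iff_tendsto_slope.mp hd
  have h2 : Filter.Tendsto (slope g x) (nhdsWithin x (Set.Ioi x)) (nhds c) :=
    h.mono_left (nhdsWithin_mono x (fun y hy => Set.mem_compl_singleton_iff.mpr (ne_of_gt hy)))
  refine ge_of_tendsto h2 ?_
  have hmem : ∀ᶠ y in nhdsWithin x (Set.Ioi x), y ∈ Set.Ioo (0:ℝ) 1 :=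
    eventually_nhdsWithin_of_eventually_nhds
      (Filter.eventually_of_mem (isOpen_Ioo.mem_nhds hx) (fun y hy => hy))
  filter_upwards [hmem, self_mem_nhdsWithin] with y hy hxy
  have hxy' : x < y := hxy
  rw [slope_def_field]
  have hg : g x ≤ g y := hm hx hy hxy'.le
  exact div_nonneg (sub_nonneg.mpr hg) (sub_nonneg.mpr hxy'.le)

/-- Bounds on the second partial derivatives of the bivariate stable tail
dependence function induced by a Pickands dependence function A with
A_∞ = sup t(1−t)A''(t) < ∞. -/
theorem pickands_second_partial_bounds (A : ℝ → ℝ) (L : ℝ → ℝ → ℝ) (Ainf : ℝ)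
    (hA1 : ConvexOn ℝ (Set.Icc 0 1) A)
    (hA2 : ∀ t ∈ Set.Icc (0:ℝ) 1, max t (1 - t) ≤ A t ∧ A t ≤ 1)
    (hA3 : ContDiffOn ℝ 2 A (Set.Ioo 0 1))
    (hAinf : ∀ t ∈ Set.Ioo (0:ℝ) 1, t * (1 - t) * deriv (deriv A) t ≤ Ainf)
    (hL : ∀ x1 x2 : ℝ, 0 < x1 + x2 → L x1 x2 = (x1 + x2) * A (x2 / (x1 + x2)))
    (x1 x2 : ℝ) (h1 : 0 < x1) (h2 : 0 < x2) :
    |deriv (fun u => deriv (fun v => L v x2) u) x1| ≤ Ainf / x1 ∧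
    |deriv (fun u => deriv (fun v => L x1 v) u) x2| ≤ Ainf / x2 ∧
    |deriv (fun u => deriv (fun v => L u v) x2) x1| ≤ Ainf / max x1 x2 := by
  have hs : (0:ℝ) < x1 + x2 := by linarith
  have hsne : x1 + x2 ≠ 0 := ne_of_gt hs
  have hτ : ∀ a b : ℝ, 0 < a → 0 < b → b / (a + b) ∈ Set.Ioo (0:ℝ) 1 := by
    intro a b ha hb
    constructor
    · positivity
    · rw [div_lt_one (by linarith)]; linarith
  have ht : x2 / (x1 + x2) ∈ Set.Ioo (0:ℝ) 1 := hτ x1 x2 h1 h2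
  have hdA : ∀ y ∈ Set.Ioo (0:ℝ) 1, HasDerivAt A (deriv A y) y := fun y hy =>
    ((hA3.differentiableOn (by norm_num)).differentiableAt (isOpen_Ioo.mem_nhds hy)).hasDerivAt
  have hA3' : ContDiffOn ℝ 1 (deriv A) (Set.Ioo 0 1) :=
    hA3.deriv_of_isOpen isOpen_Ioo (by norm_num)
  have hdA' : ∀ y ∈ Set.Ioo (0:ℝ) 1, HasDerivAt (deriv A) (deriv (deriv A) y) y := fun y hy =>
    ((hA3'.differentiableOn (by norm_num)).differentiableAt (isOpen_Ioo.mem_nhds hy)).hasDerivAt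
  -- first partial derivatives
  have P1 : ∀ a b : ℝ, 0 < a → 0 < b →
      HasDerivAt (fun v => L v b) (A (b/(a+b)) - (b/(a+b)) * deriv A (b/(a+b))) a := by
    intro a b ha hb
    have hab : (0:ℝ) < a + b := by linarith
    have hτab := hτ a b ha hb
    have hτd : HasDerivAt (fun v : ℝ => b/(v+b)) (-(b/(a+b)^2)) a := by
      have h0 : HasDerivAt (fun v : ℝ => v + b) 1 a := (hasDerivAt_id a).add_const b
      have hd := (hasDerivAt_const a b).div h0 (ne_of_gt hab)
      refine hd.congr_deriv ?_
      field_simp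
      simp
    have hAd := (hdA _ hτab).comp a hτd
    have hmul := ((hasDerivAt_id a).add_const b).mul hAd
    have heq : (fun v => L v b) =ᶠ[nhds a] fun v => (v + b) * A (b/(v+b)) := by
      filter_upwards [eventually_gt_nhds (show -b < a by linarith)] with v hv
      exact hL v b (by linarith)
    have hres := hmul.congr_of_eventuallyEq heq
    refine hres.congr_deriv ?_
    simp only [Function.comp_apply, id]
    field_simp
    ring
  have P2 : ∀ a b : ℝ, 0 < a → 0 < b →
      HasDerivAt (fun v => L a v) (A (b/(a+b)) + (a/(a+b)) * deriv A (b/(a+b))) b := by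
    intro a b ha hb
    have hab : (0:ℝ) < a + b := by linarith
    have hτab := hτ a b ha hb
    have hτd : HasDerivAt (fun v : ℝ => v/(a+v)) (a/(a+b)^2) b := by
      have h0 : HasDerivAt (fun v : ℝ => a + v) 1 b := (hasDerivAt_id b).const_add a
      have hd := (hasDerivAt_id b).div h0 (ne_of_gt hab)
      refine hd.congr_deriv ?_
      field_simp
      simp
    have hAd := (hdA _ hτab).comp b hτd
    have hmul := ((hasDerivAt_id b).const_add a).mul hAd
    have heq : (fun v => L a v) =ᶠ[nhds b] fun v => (a + v) * A (v/(a+v)) := by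
      filter_upwards [eventually_gt_nhds (show -a < b by linarith)] with v hv
      exact hL a v (by linarith)
    have hres := hmul.congr_of_eventuallyEq heq
    refine hres.congr_deriv ?_
    simp only [Function.comp_apply, id]
    field_simp
  -- common derivative building blocks at x1 for τ(u) = x2/(u+x2)
  have hτd1 : HasDerivAt (fun u : ℝ => x2/(u+x2)) (-(x2/(x1+x2)^2)) x1 := by
    have h0 : HasDerivAt (fun u : ℝ => u + x2) 1 x1 := (hasDerivAt_id x1).add_const x2
    have hd := (hasDerivAt_const x1 x2).div h0 hsne
    refine hd.congr_deriv ?_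
    field_simp
    simp
  have hAc : HasDerivAt (fun u => A (x2/(u+x2)))
      (deriv A (x2/(x1+x2)) * (-(x2/(x1+x2)^2))) x1 := (hdA _ ht).comp x1 hτd1
  have hA'c : HasDerivAt (fun u => deriv A (x2/(u+x2)))
      (deriv (deriv A) (x2/(x1+x2)) * (-(x2/(x1+x2)^2))) x1 := HasDerivAt.comp (h₂ := deriv A) x1 (hdA' _ ht) hτd1
  -- second partials
  set c := deriv (deriv A) (x2/(x1+x2)) with hc_def
  have hg1 : HasDerivAt (fun u => A (x2/(u+x2)) - (x2/(u+x2)) * deriv A (x2/(u+x2)))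
      (x2^2/(x1+x2)^3 * c) x1 := by
    have hres := hAc.sub (hτd1.mul hA'c)
    refine hres.congr_deriv ?_
    field_simp
    ring
  have hτd2 : HasDerivAt (fun u : ℝ => u/(x1+u)) (x1/(x1+x2)^2) x2 := by
    have h0 : HasDerivAt (fun u : ℝ => x1 + u) 1 x2 := (hasDerivAt_id x2).const_add x1
    have hd := (hasDerivAt_id x2).div h0 hsne
    refine hd.congr_deriv ?_
    field_simp
    simp
  have hcd2 : HasDerivAt (fun u : ℝ => x1/(x1+u)) (-(x1/(x1+x2)^2)) x2 := by
    have h0 : HasDerivAt (fun u : ℝ => x1 + u) 1 x2 := (hasDerivAt_id x2).const_add x1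
    have hd := (hasDerivAt_const x2 x1).div h0 hsne
    refine hd.congr_deriv ?_
    field_simp
    simp
  have hAc2 : HasDerivAt (fun u => A (u/(x1+u)))
      (deriv A (x2/(x1+x2)) * (x1/(x1+x2)^2)) x2 := (hdA _ ht).comp x2 hτd2
  have hA'c2 : HasDerivAt (fun u => deriv A (u/(x1+u)))
      (c * (x1/(x1+x2)^2)) x2 := HasDerivAt.comp (h₂ := deriv A) x2 (hdA' _ ht) hτd2
  have hg2 : HasDerivAt (fun u => A (u/(x1+u)) + (x1/(x1+u)) * deriv A (u/(x1+u)))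
      (x1^2/(x1+x2)^3 * c) x2 := by
    have hres := hAc2.add (hcd2.mul hA'c2)
    refine hres.congr_deriv ?_
    field_simp
    ring
  have hρd : HasDerivAt (fun u : ℝ => u/(u+x2)) (x2/(x1+x2)^2) x1 := by
    have h0 : HasDerivAt (fun u : ℝ => u + x2) 1 x1 := (hasDerivAt_id x1).add_const x2
    have hd := (hasDerivAt_id x1).div h0 hsne
    refine hd.congr_deriv ?_
    field_simp
    simp
  have hg3 : HasDerivAt (fun u => A (x2/(u+x2)) + (u/(u+x2)) * deriv A (x2/(u+x2)))
      (-(x1*x2/(x1+x2)^3 * c)) x1 := by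
    have hres := hAc.add (hρd.mul hA'c)
    refine hres.congr_deriv ?_
    field_simp
    ring
  -- identify the iterated derivatives
  have E1 : deriv (fun u => deriv (fun v => L v x2) u) x1 = x2^2/(x1+x2)^3 * c := by
    have heq : (fun u => deriv (fun v => L v x2) u)
        =ᶠ[nhds x1] (fun u => A (x2/(u+x2)) - (x2/(u+x2)) * deriv A (x2/(u+x2))) := by
      filter_upwards [eventually_gt_nhds h1] with u hu
      exact (P1 u x2 hu h2).deriv
    rw [heq.deriv_eq, hg1.deriv]
  have E2 : deriv (fun u => deriv (fun v => L x1 v) u) x2 = x1^2/(x1+x2)^3 * c := by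
    have heq : (fun u => deriv (fun v => L x1 v) u)
        =ᶠ[nhds x2] (fun u => A (u/(x1+u)) + (x1/(x1+u)) * deriv A (u/(x1+u))) := by
      filter_upwards [eventually_gt_nhds h2] with u hu
      exact (P2 x1 u h1 hu).deriv
    rw [heq.deriv_eq, hg2.deriv]
  have E3 : deriv (fun u => deriv (fun v => L u v) x2) x1 = -(x1*x2/(x1+x2)^3 * c) := by
    have heq : (fun u => deriv (fun v => L u v) x2)
        =ᶠ[nhds x1] (fun u => A (x2/(u+x2)) + (u/(u+x2)) * deriv A (x2/(u+x2))) := by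
      filter_upwards [eventually_gt_nhds h1] with u hu
      exact (P2 u x2 hu h2).deriv
    rw [heq.deriv_eq, hg3.deriv]
  -- nonnegativity of the second derivative and of Ainf
  have hmono : MonotoneOn (deriv A) (Set.Ioo 0 1) :=
    ConvexOn.monotoneOn_deriv (hA1.subset Set.Ioo_subset_Icc_self (convex_Ioo 0 1))
      (fun y hy => (hA3.differentiableOn (by norm_num)).differentiableAt
        (isOpen_Ioo.mem_nhds hy))
  have hc : 0 ≤ c := aux_deriv_nonneg_of_monotoneOn hmono ht (hdA' _ ht)
  have hAt := hAinf _ ht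
  have hA0 : 0 ≤ Ainf := by
    refine le_trans ?_ hAt
    have h1t : 0 ≤ 1 - x2/(x1+x2) := by
      have := ht.2; linarith
    have h0t : 0 ≤ x2/(x1+x2) := ht.1.le
    exact mul_nonneg (mul_nonneg h0t h1t) hc
  have hkey : x1 * x2 * c ≤ Ainf * (x1+x2)^2 := by
    have he : x2/(x1+x2) * (1 - x2/(x1+x2)) * c = x1*x2*c/(x1+x2)^2 := by
      field_simp
      ring
    rw [he] at hAt
    rwa [div_le_iff₀ (by positivity)] at hAt
  refine ⟨?_, ?_, ?_⟩
  · rw [E1, abs_of_nonneg (by positivity), le_div_iff₀ h1, div_mul_eq_mul_div,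
      div_mul_eq_mul_div, div_le_iff₀ (by positivity)]
    nlinarith [mul_le_mul_of_nonneg_left hkey h2.le,
      mul_nonneg (mul_nonneg hA0 (sq_nonneg (x1+x2))) h1.le]
  · rw [E2, abs_of_nonneg (by positivity), le_div_iff₀ h2, div_mul_eq_mul_div,
      div_mul_eq_mul_div, div_le_iff₀ (by positivity)]
    nlinarith [mul_le_mul_of_nonneg_left hkey h1.le,
      mul_nonneg (mul_nonneg hA0 (sq_nonneg (x1+x2))) h2.le]
  · have hmaxpos : (0:ℝ) < max x1 x2 := lt_max_of_lt_left h1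
    have hmax : max x1 x2 ≤ x1 + x2 := max_le (by linarith) (by linarith)
    rw [E3, abs_neg, abs_of_nonneg (by positivity), le_div_iff₀ hmaxpos,
      div_mul_eq_mul_div, div_mul_eq_mul_div, div_le_iff₀ (by positivity)]
    nlinarith [mul_le_mul_of_nonneg_left hmax (show (0:ℝ) ≤ x1*x2*c by positivity),
      mul_le_mul_of_nonneg_right hkey (show (0:ℝ) ≤ x1+x2 by linarith)]
end

section
/- Let μ be a measure on [0,∞]^d \ {0} that is homogeneous of degree −1, i.e. μ(sA) = s^{-1}μ(A) for all s > 0 and Borel sets A bounded away from the origin. Then μ assigns zero mass to every hyperplane of the form {y : y_j = c} for any fixed j and c > 0. -/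
open MeasureTheory Pointwise

/-- A measure that is homogeneous of degree −1 and finite on sets bounded away
from the origin assigns no mass to hyperplanes {y : y_j = c} with c > 0. -/
theorem homogeneous_measure_null_hyperplane {d : ℕ} (μ : Measure (Fin d → ℝ))
    (hfin : ∀ A : Set (Fin d → ℝ), (∃ ε > 0, ∀ x ∈ A, ε ≤ ‖x‖) → μ A < ⊤)
    (hhom : ∀ s : ℝ, 0 < s → ∀ A : Set (Fin d → ℝ), MeasurableSet A →
      (∃ ε > 0, ∀ x ∈ A, ε ≤ ‖x‖) → μ (s • A) = ENNReal.ofReal s⁻¹ * μ A)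
    (j : Fin d) (c : ℝ) (hc : 0 < c) :
    μ {y : Fin d → ℝ | y j = c} = 0 := by
  by_contra hne
  set H : Set (Fin d → ℝ) := {y : Fin d → ℝ | y j = c} with hH
  have hHmeas : MeasurableSet H :=
    measurableSet_eq_fun (measurable_pi_apply j) measurable_const
  have hnorm : ∀ (x : Fin d → ℝ) (a : ℝ), x j = a → 0 < a → a ≤ ‖x‖ := by
    intro x a hx ha
    calc a = ‖x j‖ := by rw [hx, Real.norm_eq_abs, abs_of_pos ha]
    _ ≤ ‖x‖ := norm_le_pi_norm x j
  have hHb : ∃ ε > 0, ∀ x ∈ H, ε ≤ ‖x‖ :=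
    ⟨c, hc, fun x hx => hnorm x c hx hc⟩
  set s : ℕ → ℝ := fun n => 1 + ((n : ℝ) + 1)⁻¹ with hs
  have hspos : ∀ n, 0 < s n := by
    intro n
    have : (0:ℝ) < ((n : ℝ) + 1)⁻¹ := by positivity
    simp only [hs]; linarith
  have hs1 : ∀ n, 1 ≤ s n := by
    intro n
    have : (0:ℝ) < ((n : ℝ) + 1)⁻¹ := by positivity
    simp only [hs]; linarith
  have hs2 : ∀ n, s n ≤ 2 := by
    intro n
    have h1 : ((n : ℝ) + 1)⁻¹ ≤ 1 := by
      rw [inv_le_one_iff₀]; right; linarith [Nat.cast_nonneg (α := ℝ) n]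
    simp only [hs]; linarith
  have hsinj : Function.Injective s := by
    intro n m hnm
    have h1 : ((n : ℝ) + 1)⁻¹ = ((m : ℝ) + 1)⁻¹ := by
      simp only [hs] at hnm; linarith
    have h2 : ((n : ℝ) + 1) = ((m : ℝ) + 1) := inv_injective h1
    have h3 : n + 1 = m + 1 := by exact_mod_cast h2
    omega
  -- the scaled hyperplanes
  have hsmul : ∀ n, s n • H = {y : Fin d → ℝ | y j = s n * c} := by
    intro n
    ext y
    constructor
    · rintro ⟨z, hz, rfl⟩
      simp only [Set.mem_setOf_eq, Pi.smul_apply, smul_eq_mul]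
      rw [hz]
    · intro hy
      refine ⟨(s n)⁻¹ • y, ?_, ?_⟩
      · simp only [hH, Set.mem_setOf_eq, Pi.smul_apply, smul_eq_mul]
        rw [hy]
        field_simp
        exact div_self (hspos n).ne'
      · show s n • (s n)⁻¹ • y = y
        rw [smul_inv_smul₀ (hspos n).ne']
  have hGmeas : ∀ n, MeasurableSet {y : Fin d → ℝ | y j = s n * c} := fun n =>
    measurableSet_eq_fun (measurable_pi_apply j) measurable_const
  have hGmu : ∀ n, μ {y : Fin d → ℝ | y j = s n * c} = ENNReal.ofReal (s n)⁻¹ * μ H := by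
    intro n
    rw [← hsmul n]
    exact hhom (s n) (hspos n) H hHmeas hHb
  -- disjointness
  have hdisj : Pairwise (Function.onFun Disjoint
      (fun n => {y : Fin d → ℝ | y j = s n * c})) := by
    intro n m hnm
    refine Set.disjoint_left.mpr ?_
    intro y hyn hym
    apply hnm
    apply hsinj
    have : s n * c = s m * c := by
      rw [← hyn, ← hym]
    exact mul_right_cancel₀ hc.ne' this
  -- the union is contained in a finite measure set
  have hsub : (⋃ n, {y : Fin d → ℝ | y j = s n * c}) ⊆ {y : Fin d → ℝ | c ≤ y j} := by
    rintro y ⟨_, ⟨n, rfl⟩, hy⟩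
    simp only [Set.mem_setOf_eq] at hy ⊢
    rw [hy]
    exact le_mul_of_one_le_left hc.le (hs1 n)
  have hBfin : μ {y : Fin d → ℝ | c ≤ y j} < ⊤ := by
    apply hfin
    refine ⟨c, hc, fun x hx => ?_⟩
    simp only [Set.mem_setOf_eq] at hx
    calc c = ‖c‖ := by rw [Real.norm_eq_abs, abs_of_pos hc]
    _ ≤ ‖x j‖ := by rw [Real.norm_eq_abs, Real.norm_eq_abs, abs_of_pos hc,
        abs_of_pos (lt_of_lt_of_le hc hx)]; exact hx
    _ ≤ ‖x‖ := norm_le_pi_norm x j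
  have hsum : ∑' n, μ {y : Fin d → ℝ | y j = s n * c} < ⊤ := by
    rw [← measure_iUnion hdisj hGmeas]
    exact lt_of_le_of_lt (measure_mono hsub) hBfin
  -- but each term is bounded below
  have hterm : ∀ n, ENNReal.ofReal 2⁻¹ * μ H ≤ μ {y : Fin d → ℝ | y j = s n * c} := by
    intro n
    rw [hGmu n]
    apply mul_le_mul_left
    apply ENNReal.ofReal_le_ofReal
    exact inv_anti₀ (hspos n) (hs2 n)
  have htop : (⊤ : ENNReal) ≤ ∑' n, μ {y : Fin d → ℝ | y j = s n * c} := by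
    calc (⊤ : ENNReal) = ∑' _ : ℕ, ENNReal.ofReal 2⁻¹ * μ H := by
          rw [ENNReal.tsum_const_eq_top_of_ne_zero]
          apply mul_ne_zero _ hne
          simp [ENNReal.ofReal_eq_zero]
    _ ≤ _ := ENNReal.tsum_le_tsum hterm
  exact absurd (lt_of_le_of_lt htop hsum) (by simp)
end
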